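/- Let M be a nonempty compact topological space equipped with a finite Borel measure μ such that μ(U) > 0 for every nonempty open set U ⊆ M, and let F : M → ℝ be continuous. Then lim_{h→∞} log(∫_M h^{F(s)} dμ(s)) / log(h) = sup_{s∈M} F(s). (Applied to F(s) = f_s(x) this gives the integral formula sup_{s∈M} f_s(x) = lim_{h→∞} log_h ∫_M h^{f_s(x)} ds used to compute the medial axis by Maslov dequantization.) -/

import Mathlib

open scoped Topology
open MeasureTheory Filter Set
set_option maxHeartbeats 1000000

/-- Maslov dequantization of a continuous function on a compact
space: `lim_{h→∞} log(∫ h^{F(s)} dμ)/log h = sup F`, for a finite Borel measure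
positive on nonempty open sets. -/
theorem maslov_dequantization_integral
    (M : Type*) [TopologicalSpace M] [CompactSpace M] [Nonempty M]
    [MeasurableSpace M] [BorelSpace M]
    (μ : MeasureTheory.Measure M) [MeasureTheory.IsFiniteMeasure μ]
    [μ.IsOpenPosMeasure]
    (F : M → ℝ) (hF : Continuous F) :
    Filter.Tendsto
      (fun h : ℝ => Real.log (∫ s, h ^ (F s) ∂μ) / Real.log h)
      Filter.atTop (𝓝 (⨆ s, F s)) := by
  obtain ⟨s0, -, hs0'⟩ := isCompact_univ.exists_isMaxOn univ_nonempty hF.continuousOn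
  obtain ⟨s1, -, hs1'⟩ := isCompact_univ.exists_isMinOn univ_nonempty hF.continuousOn
  have hs0 : ∀ s, F s ≤ F s0 := fun s => hs0' (mem_univ s)
  have hs1 : ∀ s, F s1 ≤ F s := fun s => hs1' (mem_univ s)
  have hbdd : BddAbove (range F) := ⟨F s0, by rintro _ ⟨s, rfl⟩; exact hs0 s⟩
  set T : ℝ := ⨆ s, F s with hT
  have hTs0 : T = F s0 := le_antisymm (ciSup_le hs0) (le_ciSup hbdd s0)
  -- integrability of s ↦ h ^ F s for h > 0
  have hint : ∀ h : ℝ, 0 < h → Integrable (fun s => h ^ F s) μ := by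
    intro h hh
    have hc : Continuous fun s => h ^ F s :=
      Continuous.rpow continuous_const hF (fun x => Or.inl hh.ne')
    exact integrableOn_univ.mp
      (hc.continuousOn.integrableOn_compact' isCompact_univ MeasurableSet.univ)
  -- positivity of integrand
  have hpos : ∀ h : ℝ, 0 < h → ∀ s, (0:ℝ) < h ^ F s := fun h hh s => Real.rpow_pos_of_pos hh _
  -- lower bound machinery
  have key_lower : ∀ a : ℝ, a < T → ∃ c : ℝ, 0 < c ∧
      ∀ h : ℝ, 1 < h → c * h ^ ((a + T)/2) ≤ ∫ s, h ^ F s ∂μ := by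
    intro a ha
    set a' : ℝ := (a + T)/2 with ha'
    have ha'T : a' < T := by rw [ha']; linarith
    set U : Set M := F ⁻¹' Ioi a' with hU
    have hUo : IsOpen U := (isOpen_Ioi).preimage hF
    have hUne : U.Nonempty := ⟨s0, by simp [hU, ← hTs0, ha'T]⟩
    have hμU : 0 < μ U := hUo.measure_pos μ hUne
    refine ⟨(μ U).toReal, ENNReal.toReal_pos hμU.ne' (measure_ne_top μ U), ?_⟩
    intro h hh
    have h0 : (0:ℝ) < h := lt_trans one_pos hh
    calc (μ U).toReal * h ^ a' = h ^ a' * (μ U).toReal := mul_comm _ _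
      _ ≤ ∫ s in U, h ^ F s ∂μ := by
          apply setIntegral_ge_of_const_le_real (hUo.measurableSet) (measure_ne_top μ U)
          · intro x hx
            exact Real.rpow_le_rpow_left_iff hh |>.mpr (le_of_lt hx)
          · exact (hint h h0).integrableOn
      _ ≤ ∫ s, h ^ F s ∂μ :=
          setIntegral_le_integral (hint h h0)
            (Filter.Eventually.of_forall fun s => (hpos h h0 s).le)
  -- upper bound machinery
  have key_upper : ∃ C : ℝ, 0 < C ∧
      ∀ h : ℝ, 1 < h → ∫ s, h ^ F s ∂μ ≤ C * h ^ T := by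
    refine ⟨(μ univ).toReal,
      ENNReal.toReal_pos ((isOpen_univ.measure_pos μ univ_nonempty).ne')
        (measure_ne_top μ _), ?_⟩
    intro h hh
    have h0 : (0:ℝ) < h := lt_trans one_pos hh
    calc ∫ s, h ^ F s ∂μ ≤ ∫ _s, h ^ T ∂μ := by
          apply integral_mono (hint h h0) (integrable_const _)
          intro s
          exact Real.rpow_le_rpow_of_exponent_le hh.le (le_ciSup hbdd s)
      _ = (μ univ).toReal * h ^ T := by
          simp [integral_const, smul_eq_mul, Measure.real]
  -- integral positivity
  have ipos : ∀ h : ℝ, 1 < h → 0 < ∫ s, h ^ F s ∂μ := by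
    intro h hh
    have h0 : (0:ℝ) < h := lt_trans one_pos hh
    have := setIntegral_le_integral (s := univ) (hint h h0)
      (Filter.Eventually.of_forall fun s => (hpos h h0 s).le)
    have h1 : h ^ F s1 * (μ univ).toReal ≤ ∫ s in univ, h ^ F s ∂μ :=
      setIntegral_ge_of_const_le_real MeasurableSet.univ (measure_ne_top μ _)
        (fun x _ => Real.rpow_le_rpow_left_iff hh |>.mpr (hs1 x))
        (hint h h0).integrableOn
    have h2 : 0 < h ^ F s1 * (μ univ).toReal :=
      mul_pos (hpos h h0 s1) (ENNReal.toReal_pos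
        ((isOpen_univ.measure_pos μ univ_nonempty).ne') (measure_ne_top μ _))
    linarith
  -- now the squeeze via tendsto_order
  rw [tendsto_order]
  have hlogtop : Tendsto Real.log atTop atTop := Real.tendsto_log_atTop
  constructor
  · intro a ha
    obtain ⟨c, hc, hcb⟩ := key_lower a ha
    have hlim : Tendsto (fun h : ℝ => (a + T)/2 + Real.log c / Real.log h) atTop
        (𝓝 ((a + T)/2 + 0)) :=
      tendsto_const_nhds.add (tendsto_const_nhds.div_atTop hlogtop)
    have hev1 : ∀ᶠ h : ℝ in atTop,
        (a + T)/2 + Real.log c / Real.log h ≤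
          Real.log (∫ s, h ^ F s ∂μ) / Real.log h := by
      filter_upwards [eventually_gt_atTop (1:ℝ)] with h hh
      have hlh : 0 < Real.log h := Real.log_pos hh
      have h0 : (0:ℝ) < h := lt_trans one_pos hh
      have hle : Real.log (c * h ^ ((a + T)/2)) ≤ Real.log (∫ s, h ^ F s ∂μ) :=
        Real.log_le_log (mul_pos hc (Real.rpow_pos_of_pos h0 _)) (hcb h hh)
      rw [Real.log_mul hc.ne' (Real.rpow_pos_of_pos h0 _).ne', Real.log_rpow h0] at hle
      rw [le_div_iff₀ hlh]
      calc ((a + T)/2 + Real.log c / Real.log h) * Real.log h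
          = Real.log c + (a + T)/2 * Real.log h := by field_simp; ring
        _ ≤ _ := hle
    have hev2 := hlim.eventually (eventually_gt_nhds (by linarith : a < (a + T)/2 + 0))
    filter_upwards [hev2, hev1] with h h1 h2
    exact lt_of_lt_of_le h1 h2
  · intro a ha
    obtain ⟨C, hC, hCb⟩ := key_upper
    have hlim : Tendsto (fun h : ℝ => T + Real.log C / Real.log h) atTop
        (𝓝 (T + 0)) :=
      tendsto_const_nhds.add (tendsto_const_nhds.div_atTop hlogtop)
    have hev : ∀ᶠ h : ℝ in atTop,
        Real.log (∫ s, h ^ F s ∂μ) / Real.log h ≤ T + Real.log C / Real.log h := by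
      filter_upwards [eventually_gt_atTop (1:ℝ)] with h hh
      have hlh : 0 < Real.log h := Real.log_pos hh
      have h0 : (0:ℝ) < h := lt_trans one_pos hh
      have hle : Real.log (∫ s, h ^ F s ∂μ) ≤ Real.log (C * h ^ T) :=
        Real.log_le_log (ipos h hh) (hCb h hh)
      rw [Real.log_mul hC.ne' (Real.rpow_pos_of_pos h0 _).ne', Real.log_rpow h0] at hle
      rw [div_le_iff₀ hlh]
      calc Real.log (∫ s, h ^ F s ∂μ) ≤ Real.log C + T * Real.log h := hle
        _ = (T + Real.log C / Real.log h) * Real.log h := by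
            field_simp; ring
    have := hlim.eventually (eventually_lt_nhds (by linarith : T + 0 < a))
    filter_upwards [this, hev] with h h1 h2
    exact lt_of_le_of_lt h2 h1
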